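/- Let A and B be additive commutative groups and let S be an additive submonoid of A whose closure as an additive subgroup is all of A (so S is a family of generators of A closed under addition). If f, g : A → B are polynomial maps with f s = g s for every s ∈ S, then f = g. -/

import Mathlib

/-- A map `f : M → B` has degree `≤ 0` if it is constant, and degree `≤ n + 1` if for every
`a : M` the map `x ↦ f (x + a) - f x - f a` has degree `≤ n`. -/
def PolyDegLE {M B : Type*} [AddCommMonoid M] [AddCommGroup B] : ℕ → (M → B) → Prop
  | 0, f => ∃ b, ∀ x, f x = b
  | n + 1, f => ∀ a : M, PolyDegLE n fun x => f (x + a) - f x - f a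

/-- A map is polynomial if it has degree `≤ n` for some natural number `n`. -/
def IsPolynomialMap {M B : Type*} [AddCommMonoid M] [AddCommGroup B] (f : M → B) : Prop :=
  ∃ n, PolyDegLE n f

theorem PolyDegLE.congr' {M B : Type*} [AddCommMonoid M] [AddCommGroup B] {n : ℕ}
    {f g : M → B} (h : PolyDegLE n f) (e : ∀ x, f x = g x) : PolyDegLE n g := by
  have : f = g := funext e
  rwa [← this]

theorem PolyDegLE_sub {M B : Type*} [AddCommMonoid M] [AddCommGroup B] :
    ∀ (n : ℕ) (f g : M → B), PolyDegLE n f → PolyDegLE n g →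
      PolyDegLE n (fun x => f x - g x)
  | 0, f, g, ⟨b, hb⟩, ⟨c, hc⟩ => ⟨b - c, fun x => by simp only [hb, hc]⟩
  | n + 1, f, g, hf, hg => fun a => by
      have := PolyDegLE_sub n _ _ (hf a) (hg a)
      exact this.congr' (fun x => by dsimp; abel)

theorem PolyDegLE_succ {M B : Type*} [AddCommMonoid M] [AddCommGroup B] :
    ∀ (n : ℕ) (f : M → B), PolyDegLE n f → PolyDegLE (n + 1) f
  | 0, f, ⟨b, hb⟩ => fun a => ⟨-b, fun x => by simp only [hb]; abel⟩
  | n + 1, f, hf => fun a => PolyDegLE_succ n _ (hf a)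

theorem PolyDegLE_le {M B : Type*} [AddCommMonoid M] [AddCommGroup B]
    {n m : ℕ} (h : n ≤ m) {f : M → B} (hf : PolyDegLE n f) : PolyDegLE m f := by
  induction m, h using Nat.le_induction with
  | base => exact hf
  | succ m hm ih => exact PolyDegLE_succ m f ih

/-- If two polynomial maps `A → B` between additive commutative groups agree on an additive
submonoid `S` of `A` which generates `A` as a group, then they are equal. -/
theorem stmt1 {A B : Type*} [AddCommGroup A] [AddCommGroup B]
    (S : AddSubmonoid A) (hS : AddSubgroup.closure (S : Set A) = ⊤)
    (f g : A → B) (hf : IsPolynomialMap f) (hg : IsPolynomialMap g)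
    (hfg : ∀ s ∈ S, f s = g s) : f = g := by
  obtain ⟨n, hf⟩ := hf
  obtain ⟨m, hg⟩ := hg
  have hh : PolyDegLE (max n m) (fun x => f x - g x) :=
    PolyDegLE_sub _ _ _ (PolyDegLE_le (le_max_left _ _) hf)
      (PolyDegLE_le (le_max_right _ _) hg)
  -- every element of A is a difference of elements of S
  have rep : ∀ x : A, ∃ s t, s ∈ S ∧ t ∈ S ∧ x = s - t := by
    intro x
    have hx : x ∈ AddSubgroup.closure (S : Set A) := hS ▸ AddSubgroup.mem_top x
    induction hx using AddSubgroup.closure_induction with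
    | mem y hy => exact ⟨y, 0, hy, S.zero_mem, by simp⟩
    | zero => exact ⟨0, 0, S.zero_mem, S.zero_mem, by simp⟩
    | add y z _ _ hy hz =>
        obtain ⟨s, t, hs, ht, rfl⟩ := hy
        obtain ⟨s', t', hs', ht', rfl⟩ := hz
        exact ⟨s + s', t + t', S.add_mem hs hs', S.add_mem ht ht', by abel⟩
    | neg y _ hy =>
        obtain ⟨s, t, hs, ht, rfl⟩ := hy
        exact ⟨t, s, ht, hs, by abel⟩
  have key : ∀ (k : ℕ) (p : A → B), PolyDegLE k p → (∀ s ∈ S, p s = 0) → ∀ x, p x = 0 := by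
    intro k
    induction k with
    | zero =>
        rintro p ⟨b, hb⟩ hp x
        have h0 := hp 0 S.zero_mem
        rw [hb] at h0
        rw [hb, h0]
    | succ k ih =>
        intro p hp hps x
        have add : ∀ a ∈ S, ∀ y : A, p (y + a) = p y + p a := by
          intro a ha y
          have h0 : ∀ s ∈ S, (fun x => p (x + a) - p x - p a) s = 0 := by
            intro s hs
            dsimp
            rw [hps s hs, hps a ha, hps _ (S.add_mem hs ha)]
            abel
          have := ih _ (hp a) h0 y
          rwa [sub_sub, sub_eq_zero] at this
        obtain ⟨s, t, hs, ht, rfl⟩ := rep x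
        have h1 : p (s - t + t) = p (s - t) + p t := add t ht (s - t)
        rw [sub_add_cancel, hps s hs, hps t ht, add_zero] at h1
        exact h1.symm
  have : ∀ x, f x - g x = 0 := key _ _ hh (fun s hs => by rw [hfg s hs]; abel)
  funext x
  exact sub_eq_zero.mp (this x)
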